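/- Let M be an Hadamard manifold and X an M-valued random element with distribution of bounded support. If q minimizes p ↦ E[ρ(X,p;β,ξ)], then ‖E[∇ρ(X,q;β,ξ); X ≠ q] − P(X=q)·βξ_q‖ ≤ P(X=q). In particular, if P(X=q)=0 then E[∇ρ(X,q;β,ξ); X ≠ q] = 0. -/

import Mathlib

open Filter MeasureTheory
open scoped RealInnerProductSpace Topology

/-- Let `M` be an Hadamard manifold and `X` an `M`-valued random element
whose law `μ` has bounded (compact) support.  Let `ρ(x,p) = ρ(x,p;β,ξ)` be the quantile
loss, `gradρ x = ∇ρ(x,q;β,ξ) ∈ T_qM ≅ E` its Riemannian gradient in the second argument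
at the point `q` (for `x ≠ q`), characterized through geodesics `γ_h(t) = exp_q(t h)` by
the one-sided directional derivatives `lim_{t→0+} (ρ(x,γ_h(t)) − ρ(x,q))/t = ⟪gradρ x, h⟫`
for `x ≠ q` and `= 1 − ⟪β ξ_q, h⟫` for `x = q`, with uniformly bounded difference
quotients (bounded support).  If `q` minimizes `p ↦ E[ρ(X,p)]`, then
`‖E[∇ρ(X,q); X ≠ q] − P(X = q)·β ξ_q‖ ≤ P(X = q)`; in particular if `P(X = q) = 0` then
`E[∇ρ(X,q); X ≠ q] = 0`. -/
theorem gradient_condition_at_quantile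
    {M : Type*} [MetricSpace M] [MeasurableSpace M] [BorelSpace M]
    {E : Type*} [NormedAddCommGroup E] [InnerProductSpace ℝ E] [CompleteSpace E]
    (μ : Measure M) [IsProbabilityMeasure μ]
    (hsupp : ∃ K : Set M, IsCompact K ∧ μ Kᶜ = 0)
    (ρ : M → M → ℝ) (gradρ : M → E) (q : M)
    (β : ℝ) (hβ0 : 0 ≤ β) (hβ1 : β < 1) (ξq : E) (hξq : ‖ξq‖ = 1)
    (γ : E → ℝ → M) (hγ0 : ∀ h : E, γ h 0 = q)
    (hρqq : ρ q q = 0)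
    (hderiv : ∀ h : E, ‖h‖ = 1 → ∀ x : M, x ≠ q →
      Tendsto (fun t : ℝ => (ρ x (γ h t) - ρ x q) / t)
        (nhdsWithin 0 (Set.Ioi 0)) (nhds ⟪gradρ x, h⟫))
    (hderivq : ∀ h : E, ‖h‖ = 1 →
      Tendsto (fun t : ℝ => (ρ q (γ h t) - ρ q q) / t)
        (nhdsWithin 0 (Set.Ioi 0)) (nhds (1 - ⟪β • ξq, h⟫)))
    (hdom : ∃ C : ℝ, ∀ h : E, ‖h‖ = 1 →
      ∀ᵐ x ∂μ, ∀ t ∈ Set.Ioc (0 : ℝ) 1, |ρ x (γ h t) - ρ x q| / t ≤ C)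
    (hint : ∀ p : M, Integrable (fun x => ρ x p) μ)
    (hgradint : IntegrableOn gradρ {x : M | x ≠ q} μ)
    (hmin : ∀ p : M, ∫ x, ρ x q ∂μ ≤ ∫ x, ρ x p ∂μ) :
    ‖(∫ x in {x : M | x ≠ q}, gradρ x ∂μ) - (μ {q}).toReal • (β • ξq)‖ ≤ (μ {q}).toReal ∧
      (μ {q} = 0 → (∫ x in {x : M | x ≠ q}, gradρ x ∂μ) = 0) := by

  classical
  obtain ⟨C, hC⟩ := hdom
  have hqmeas : MeasurableSet ({q} : Set M) := measurableSet_singleton q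
  have hs_compl : {x : M | x ≠ q} = ({q} : Set M)ᶜ := by ext x; simp
  have hsmeas : MeasurableSet {x : M | x ≠ q} := by rw [hs_compl]; exact hqmeas.compl
  set m : ℝ := (μ {q}).toReal with hm_def
  have hm_nonneg : 0 ≤ m := ENNReal.toReal_nonneg
  set I : E := ∫ x in {x : M | x ≠ q}, gradρ x ∂μ with hI_def
  have key : ∀ h : E, ‖h‖ = 1 → 0 ≤ ⟪I, h⟫ + m * (1 - ⟪β • ξq, h⟫) := by
    intro h hh
    set c : ℝ := 1 - ⟪β • ξq, h⟫ with hc_def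
    set f : M → ℝ := fun x => if x = q then c else ⟪gradρ x, h⟫ with hf_def
    have hg_int : IntegrableOn (fun x => ⟪gradρ x, h⟫) {x : M | x ≠ q} μ :=
      hgradint.inner_const h
    have hfs : IntegrableOn f {x : M | x ≠ q} μ := by
      refine hg_int.congr_fun (fun x hx => ?_) hsmeas
      exact (if_neg (hx : x ≠ q)).symm
    have hfc : IntegrableOn f ({x : M | x ≠ q})ᶜ μ := by
      have : IntegrableOn (fun _ : M => c) ({x : M | x ≠ q})ᶜ μ :=
        integrableOn_const (measure_ne_top μ _)
      refine this.congr_fun (fun x hx => ?_) hsmeas.compl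
      have hxq : x = q := by simpa using hx
      exact (if_pos hxq).symm
    have hf_int : Integrable f μ := by
      rw [← integrableOn_univ, ← Set.union_compl_self {x : M | x ≠ q}]
      exact hfs.union hfc
    have h1 : ∫ x in {x : M | x ≠ q}, f x ∂μ = ⟪I, h⟫ := by
      rw [setIntegral_congr_fun hsmeas (g := fun x => ⟪gradρ x, h⟫)
        (fun x hx => if_neg (hx : x ≠ q))]
      rw [show (fun x => ⟪gradρ x, h⟫) = fun x => ⟪h, gradρ x⟫ by
        funext x; rw [real_inner_comm]]
      rw [integral_inner hgradint h, real_inner_comm]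
    have h2 : ∫ x in ({x : M | x ≠ q})ᶜ, f x ∂μ = m * c := by
      have hcompl : ({x : M | x ≠ q})ᶜ = ({q} : Set M) := by
        rw [hs_compl, compl_compl]
      rw [hcompl, setIntegral_congr_fun hqmeas (g := fun _ => c)
        (fun x hx => by
          have hxq : x = q := hx
          rw [hf_def]
          exact if_pos hxq), setIntegral_const, smul_eq_mul, Measure.real_def]
    have hint_f : ∫ x, f x ∂μ = ⟪I, h⟫ + m * c := by
      rw [← integral_add_compl hsmeas hf_int, h1, h2]
    have hIoc : Set.Ioc (0 : ℝ) 1 ∈ 𝓝[>] (0 : ℝ) :=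
      Ioc_mem_nhdsGT_of_mem ⟨le_refl 0, zero_lt_one⟩
    have hten : Tendsto (fun t : ℝ => ∫ x, (ρ x (γ h t) - ρ x q) / t ∂μ)
        (𝓝[>] (0 : ℝ)) (𝓝 (∫ x, f x ∂μ)) := by
      refine tendsto_integral_filter_of_dominated_convergence (fun _ => C)
        (Eventually.of_forall fun t =>
          (((hint (γ h t)).sub (hint q)).div_const t).aestronglyMeasurable)
        ?_ (integrable_const C) ?_
      · filter_upwards [hIoc] with t ht
        filter_upwards [hC h hh] with x hx
        have := hx t ht
        rwa [Real.norm_eq_abs, abs_div, abs_of_pos ht.1]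
      · refine Eventually.of_forall fun x => ?_
        by_cases hx : x = q
        · subst hx
          simpa [hf_def] using hderivq h hh
        · simpa [hf_def, hx] using hderiv h hh x hx
    have hnn : ∀ᶠ t in 𝓝[>] (0 : ℝ), 0 ≤ ∫ x, (ρ x (γ h t) - ρ x q) / t ∂μ := by
      filter_upwards [self_mem_nhdsWithin] with t ht
      have heq : ∫ x, (ρ x (γ h t) - ρ x q) / t ∂μ
          = ((∫ x, ρ x (γ h t) ∂μ) - ∫ x, ρ x q ∂μ) / t := by
        rw [integral_div, integral_sub (hint _) (hint q)]
      rw [heq]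
      exact div_nonneg (sub_nonneg.mpr (hmin _)) (le_of_lt ht)
    have h0le : 0 ≤ ∫ x, f x ∂μ := ge_of_tendsto hten hnn
    rwa [hint_f] at h0le
  have hv : ∀ h : E, ‖h‖ = 1 → -m ≤ ⟪I - m • (β • ξq), h⟫ := by
    intro h hh
    have hk := key h hh
    rw [inner_sub_left, real_inner_smul_left]
    nlinarith [hk]
  have hnorm : ‖I - m • (β • ξq)‖ ≤ m := by
    rcases eq_or_ne (I - m • (β • ξq)) 0 with h0 | h0
    · simpa [h0] using hm_nonneg
    · set v : E := I - m • (β • ξq) with hv_def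
      have hvn : ‖v‖ ≠ 0 := norm_ne_zero_iff.mpr h0
      have hh : ‖-(‖v‖⁻¹ • v)‖ = 1 := by
        rw [norm_neg, norm_smul, norm_inv, norm_norm, inv_mul_cancel₀ hvn]
      have hiv : ⟪v, -(‖v‖⁻¹ • v)⟫ = -‖v‖ := by
        rw [inner_neg_right, real_inner_smul_right, real_inner_self_eq_norm_sq]
        field_simp
      have := hv _ hh
      rw [hiv] at this
      linarith
  refine ⟨hnorm, fun hq0 => ?_⟩
  have hm0 : m = 0 := by simp [hm_def, hq0]
  rw [hm0] at hnorm
  simpa using hnorm
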